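/- arXiv:1202.4845 — 2 statements merged into one kernel-verified Lean document; each statement's English description precedes it below -/
import Mathlib

section
/- Let m ∈ Π₂ and ε > 0. For every measurable control v : [0,T] → V there exists δ(v) > 0 such that for every measurable control u : [0,T] → U, |∫_{ℝ^N} ∫_0^T ℓ(x,s,u(s),v(s)) ds dm(x) − ∫_{ℝ^N} ∫_0^T ℓ(x,s,u(s),v((s−δ(v))₊)) ds dm(x)| ≤ ε, where (s−δ)₊ = max(s−δ,0). -/
open MeasureTheory Set Filter Topology
open scoped ENNReal NNReal

noncomputable section

abbrev EN (N : ℕ) : Type := EuclideanSpace ℝ (Fin N)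



/-- The set `Π₂` of Borel probability measures on `ℝ^N` with finite second moment. -/
def Pi2 (N : ℕ) : Set (Measure (EN N)) :=
  {m | IsProbabilityMeasure m ∧ (∫⁻ x, (‖x‖₊ : ℝ≥0∞) ^ 2 ∂m) < ⊤}

/-- Couplings of two measures. -/
def couplings {N : ℕ} (m m' : Measure (EN N)) : Set (Measure (EN N × EN N)) :=
  {γ | γ.map Prod.fst = m ∧ γ.map Prod.snd = m'}

/-- The Monge-Kantorovich distance `d₁`. -/
def d1 {N : ℕ} (m m' : Measure (EN N)) : ℝ :=
  ⨅ γ : couplings m m', ∫ p, ‖p.1 - p.2‖ ∂(γ.1)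

/-- Standing assumptions on the instantaneous reward `ℓ` : continuity in all variables,
boundedness, and Lipschitz continuity in `(x,t)` uniformly in `(u,v)`. -/
def RegReward (T : ℝ) {N dU dV : ℕ} (U : Set (EN dU)) (V : Set (EN dV))
    (l : EN N → ℝ → EN dU → EN dV → ℝ) : Prop :=
  ContinuousOn (fun p : EN N × ℝ × EN dU × EN dV => l p.1 p.2.1 p.2.2.1 p.2.2.2)
      (univ ×ˢ Icc 0 T ×ˢ U ×ˢ V) ∧
  (∃ C, ∀ x, ∀ t ∈ Icc 0 T, ∀ u ∈ U, ∀ v ∈ V, |l x t u v| ≤ C) ∧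
  ∃ C, ∀ x x', ∀ t ∈ Icc 0 T, ∀ t' ∈ Icc 0 T, ∀ u ∈ U, ∀ v ∈ V,
    |l x t u v - l x' t' u v| ≤ C * (‖x - x'‖ + |t - t'|)

/-- The Hamiltonian `H(t,μ) = inf_u sup_v ∫ ℓ(x,t,u,v) dμ(x)`. -/
def Ham {N dU dV : ℕ} (U : Set (EN dU)) (V : Set (EN dV))
    (l : EN N → ℝ → EN dU → EN dV → ℝ) (t : ℝ) (μ : Measure (EN N)) : ℝ :=
  ⨅ u : U, ⨆ v : V, ∫ x, l x t u v ∂μ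

/-- Isaacs' condition. -/
def IsaacsCond (T : ℝ) {N dU dV : ℕ} (U : Set (EN dU)) (V : Set (EN dV))
    (l : EN N → ℝ → EN dU → EN dV → ℝ) : Prop :=
  ∀ t ∈ Icc 0 T, ∀ m ∈ Pi2 N,
    (⨅ u : U, ⨆ v : V, ∫ x, l x t u v ∂m) = ⨆ v : V, ⨅ u : U, ∫ x, l x t u v ∂m



lemma bdd_integrableOn {E : Type*} [NormedAddCommGroup E] {f : ℝ → E} {s : Set ℝ}
    (hs : volume s ≠ ⊤) (hf : AEStronglyMeasurable f (volume.restrict s)) {C : ℝ}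
    (hC : ∀ x, ‖f x‖ ≤ C) : IntegrableOn f s := by
  haveI : IsFiniteMeasure (volume.restrict s) :=
    ⟨by rwa [Measure.restrict_apply_univ, lt_top_iff_ne_top]⟩
  exact Integrable.mono' (integrable_const C) hf (Eventually.of_forall fun x => hC x)

lemma shift_small {d : ℕ} {T β B : ℝ} (hT : 0 < T) (hβ : 0 < β)
    (v : ℝ → EN d) (hv : Measurable v) (hB : ∀ s, ‖v s‖ ≤ B) :
    ∃ δ, 0 < δ ∧ δ ≤ T ∧
      (∫ s in Icc 0 T, ‖v s - v (max (s - δ) 0)‖) ≤ β := by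
  set f : ℝ → EN d := (Icc (0:ℝ) T).indicator v with hf
  have hfmeas : Measurable f := hv.indicator measurableSet_Icc
  have hIccTop : volume (Icc (0:ℝ) T) ≠ ⊤ := by simp [Real.volume_Icc]
  have hfB : ∀ x, ‖f x‖ ≤ max B 0 := by
    intro x
    by_cases hx : x ∈ Icc (0:ℝ) T <;>
      simp [hf, indicator_of_mem, indicator_of_notMem, hx, le_max_iff, hB x]
  have hfint : Integrable f := by
    rw [hf, integrable_indicator_iff measurableSet_Icc]
    exact bdd_integrableOn hIccTop hv.aestronglyMeasurable (fun x => hB x)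
  obtain ⟨g, hgsupp, hgapprox, hgcont, hgint⟩ :=
    hfint.exists_hasCompactSupport_integral_sub_le (show (0:ℝ) < β/4 by linarith)
  have hgu : UniformContinuous g := hgsupp.uniformContinuous_of_continuous hgcont
  obtain ⟨δ₀, hδ₀, hδ₀spec⟩ := Metric.uniformContinuous_iff.1 hgu (β/(4*T))
    (by positivity)
  obtain ⟨Bg, hBg⟩ := hgsupp.exists_bound_of_continuous hgcont
  set δ : ℝ := min (min T (δ₀/2)) (β/(4*(‖g 0 - f 0‖ + 1))) with hδdef
  have hδpos : 0 < δ := by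
    apply lt_min (lt_min hT (by linarith))
    positivity
  have hδT : δ ≤ T := le_trans (min_le_left _ _) (min_le_left _ _)
  have hδδ₀ : δ < δ₀ := lt_of_le_of_lt (le_trans (min_le_left _ _) (min_le_right _ _))
    (by linarith)
  have hδ3 : δ * ‖g 0 - f 0‖ ≤ β/4 := by
    have h1 : δ ≤ β/(4*(‖g 0 - f 0‖ + 1)) := min_le_right _ _
    have h2 : (0:ℝ) < ‖g 0 - f 0‖ + 1 := by positivity
    calc δ * ‖g 0 - f 0‖ ≤ (β/(4*(‖g 0 - f 0‖ + 1))) * (‖g 0 - f 0‖ + 1) := by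
          apply mul_le_mul h1 (by linarith) (norm_nonneg _) (by positivity)
      _ = β/4 := by field_simp
  refine ⟨δ, hδpos, hδT, ?_⟩
  set φ : ℝ → ℝ := fun s => max (s - δ) 0 with hφdef
  have hφmeas : Measurable φ := (measurable_id.sub_const δ).max measurable_const
  have hφmem : ∀ s ∈ Icc (0:ℝ) T, φ s ∈ Icc (0:ℝ) T := by
    intro s hs
    rcases hs with ⟨h0, h1⟩
    constructor
    · exact le_max_right _ _
    · exact max_le (by linarith) (by linarith)
  have hφclose : ∀ s ∈ Icc (0:ℝ) T, |s - φ s| ≤ δ := by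
    intro s hs
    rcases hs with ⟨h0, h1⟩
    rcases le_or_gt δ s with h | h
    · rw [hφdef]; simp only [max_eq_left (by linarith : (0:ℝ) ≤ s - δ)]
      rw [abs_of_nonneg (by linarith)]; linarith
    · rw [hφdef]; simp only [max_eq_right (by linarith : s - δ ≤ 0)]
      rw [abs_of_nonneg (by linarith)]; linarith
  -- the three comparison functions
  have hfg_int : Integrable (fun s => ‖f s - g s‖) := (hfint.sub hgint).norm
  have h2meas : Measurable fun s => ‖g s - g (φ s)‖ :=
    (hgcont.measurable.sub (hgcont.measurable.comp hφmeas)).norm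
  have h3meas : Measurable fun s => ‖g (φ s) - f (φ s)‖ :=
    ((hgcont.measurable.comp hφmeas).sub (hfmeas.comp hφmeas)).norm
  have h2bdd : ∀ s, ‖(fun s => ‖g s - g (φ s)‖) s‖ ≤ Bg + Bg := by
    intro s
    rw [norm_norm]
    exact le_trans (norm_sub_le _ _) (add_le_add (hBg _) (hBg _))
  have h3bdd : ∀ s, ‖(fun s => ‖g (φ s) - f (φ s)‖) s‖ ≤ Bg + max B 0 := by
    intro s
    rw [norm_norm]
    exact le_trans (norm_sub_le _ _) (add_le_add (hBg _) (hfB _))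
  have h2int : IntegrableOn (fun s => ‖g s - g (φ s)‖) (Icc 0 T) :=
    bdd_integrableOn hIccTop h2meas.aestronglyMeasurable h2bdd
  have h3intOn : ∀ s' : Set ℝ, s' ⊆ Icc 0 T → volume s' ≠ ⊤ →
      IntegrableOn (fun s => ‖g (φ s) - f (φ s)‖) s' := by
    intro s' _ hs'
    exact bdd_integrableOn hs' h3meas.aestronglyMeasurable h3bdd
  -- pointwise triangle inequality
  have hptwise : ∀ s ∈ Icc (0:ℝ) T, ‖v s - v (φ s)‖ ≤
      ‖f s - g s‖ + ‖g s - g (φ s)‖ + ‖g (φ s) - f (φ s)‖ := by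
    intro s hs
    have hfs : f s = v s := indicator_of_mem hs v
    have hfφ : f (φ s) = v (φ s) := indicator_of_mem (hφmem s hs) v
    calc ‖v s - v (φ s)‖ = ‖(f s - g s) + (g s - g (φ s)) + (g (φ s) - f (φ s))‖ := by
          rw [hfs, hfφ]; congr 1; abel
      _ ≤ ‖f s - g s‖ + ‖g s - g (φ s)‖ + ‖g (φ s) - f (φ s)‖ :=
          le_trans (norm_add_le _ _) (by gcongr; exact norm_add_le _ _)
  -- integral bounds for the three pieces
  have I1 : (∫ s in Icc 0 T, ‖f s - g s‖) ≤ β/4 := by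
    refine le_trans (setIntegral_le_integral hfg_int ?_) hgapprox
    exact Eventually.of_forall fun s => norm_nonneg _
  have I2 : (∫ s in Icc 0 T, ‖g s - g (φ s)‖) ≤ β/4 := by
    have hb : ∀ s ∈ Icc (0:ℝ) T, ‖g s - g (φ s)‖ ≤ β/(4*T) := by
      intro s hs
      have : dist s (φ s) < δ₀ := by
        rw [Real.dist_eq]
        exact lt_of_le_of_lt (hφclose s hs) hδδ₀
      have := hδ₀spec this
      rw [dist_eq_norm] at this
      exact le_of_lt this
    calc (∫ s in Icc 0 T, ‖g s - g (φ s)‖) ≤ ∫ _ in Icc (0:ℝ) T, β/(4*T) := by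
          apply setIntegral_mono_on h2int (integrableOn_const hIccTop)
            measurableSet_Icc hb
      _ = (volume (Icc (0:ℝ) T)).toReal * (β/(4*T)) := by
          rw [setIntegral_const]; rfl
      _ = β/4 := by
          rw [Real.volume_Icc, ENNReal.toReal_ofReal (by linarith : (0:ℝ) ≤ T - 0)]
          field_simp
          ring
  have I3 : (∫ s in Icc 0 T, ‖g (φ s) - f (φ s)‖) ≤ β/4 + β/4 := by
    have hIoc1 : Ioc (0:ℝ) δ ⊆ Icc 0 T := Ioc_subset_Icc_self.trans (Icc_subset_Icc le_rfl hδT)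
    have hIoc2 : Ioc δ T ⊆ Icc 0 T := Ioc_subset_Icc_self.trans (Icc_subset_Icc (le_of_lt hδpos) le_rfl)
    have hvol1 : volume (Ioc (0:ℝ) δ) ≠ ⊤ := by simp [Real.volume_Ioc]
    have hvol2 : volume (Ioc δ T) ≠ ⊤ := by simp [Real.volume_Ioc]
    have hII1 : IntervalIntegrable (fun s => ‖g (φ s) - f (φ s)‖) volume 0 δ := by
      rw [intervalIntegrable_iff, uIoc_of_le (le_of_lt hδpos)]
      exact h3intOn _ hIoc1 hvol1
    have hII2 : IntervalIntegrable (fun s => ‖g (φ s) - f (φ s)‖) volume δ T := by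
      rw [intervalIntegrable_iff, uIoc_of_le hδT]
      exact h3intOn _ hIoc2 hvol2
    have hsplit : (∫ s in Icc 0 T, ‖g (φ s) - f (φ s)‖) =
        (∫ s in (0:ℝ)..δ, ‖g (φ s) - f (φ s)‖) + ∫ s in δ..T, ‖g (φ s) - f (φ s)‖ := by
      rw [integral_Icc_eq_integral_Ioc, ← intervalIntegral.integral_of_le (by linarith : (0:ℝ) ≤ T),
        ← intervalIntegral.integral_add_adjacent_intervals hII1 hII2]
    have hpart1 : (∫ s in (0:ℝ)..δ, ‖g (φ s) - f (φ s)‖) ≤ β/4 := by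
      have heq : EqOn (fun s => ‖g (φ s) - f (φ s)‖) (fun _ => ‖g 0 - f 0‖) (uIcc 0 δ) := by
        intro s hs
        rw [uIcc_of_le (le_of_lt hδpos)] at hs
        have : φ s = 0 := max_eq_right (by rcases hs with ⟨_, h⟩; linarith)
        simp only [this]
      rw [intervalIntegral.integral_congr heq, intervalIntegral.integral_const, smul_eq_mul,
        sub_zero]
      exact hδ3
    have hpart2 : (∫ s in δ..T, ‖g (φ s) - f (φ s)‖) ≤ β/4 := by
      have heq : EqOn (fun s => ‖g (φ s) - f (φ s)‖) (fun s => ‖g (s - δ) - f (s - δ)‖)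
          (uIcc δ T) := by
        intro s hs
        rw [uIcc_of_le hδT] at hs
        have : φ s = s - δ := max_eq_left (by rcases hs with ⟨h, _⟩; linarith)
        simp only [this]
      rw [intervalIntegral.integral_congr heq]
      have := intervalIntegral.integral_comp_sub_right (a := δ) (b := T)
        (fun s => ‖g s - f s‖) δ
      rw [this, sub_self]
      rw [intervalIntegral.integral_of_le (by linarith : (0:ℝ) ≤ T - δ)]
      have : (∫ s in Ioc (0:ℝ) (T - δ), ‖g s - f s‖) ≤ ∫ s, ‖g s - f s‖ := by
        apply setIntegral_le_integral (hgint.sub hfint).norm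
        exact Eventually.of_forall fun s => norm_nonneg _
      refine le_trans this (le_trans (le_of_eq ?_) hgapprox)
      congr 1
      ext s
      rw [norm_sub_rev]
    rw [hsplit]
    exact add_le_add hpart1 hpart2
  -- put everything together
  have hvmeas : Measurable fun s => ‖v s - v (φ s)‖ := (hv.sub (hv.comp hφmeas)).norm
  have hvbdd : ∀ s, ‖(fun s => ‖v s - v (φ s)‖) s‖ ≤ B + B := by
    intro s
    rw [norm_norm]
    exact le_trans (norm_sub_le _ _) (add_le_add (hB _) (hB _))
  have hvint : IntegrableOn (fun s => ‖v s - v (φ s)‖) (Icc 0 T) :=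
    bdd_integrableOn hIccTop hvmeas.aestronglyMeasurable hvbdd
  have hrhs_int : IntegrableOn
      (fun s => ‖f s - g s‖ + ‖g s - g (φ s)‖ + ‖g (φ s) - f (φ s)‖) (Icc 0 T) :=
    (hfg_int.integrableOn.add h2int).add (h3intOn _ (subset_refl _) hIccTop)
  calc (∫ s in Icc 0 T, ‖v s - v (φ s)‖)
      ≤ ∫ s in Icc 0 T, (‖f s - g s‖ + ‖g s - g (φ s)‖ + ‖g (φ s) - f (φ s)‖) := by
        exact setIntegral_mono_on hvint hrhs_int measurableSet_Icc hptwise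
    _ = (∫ s in Icc 0 T, ‖f s - g s‖) + (∫ s in Icc 0 T, ‖g s - g (φ s)‖)
        + ∫ s in Icc 0 T, ‖g (φ s) - f (φ s)‖ := by
        have e1 : (∫ s in Icc (0:ℝ) T, ((‖f s - g s‖ + ‖g s - g (φ s)‖) + ‖g (φ s) - f (φ s)‖)) =
            (∫ s in Icc (0:ℝ) T, (‖f s - g s‖ + ‖g s - g (φ s)‖))
              + ∫ s in Icc (0:ℝ) T, ‖g (φ s) - f (φ s)‖ :=
          integral_add (hfg_int.integrableOn.add h2int) (h3intOn _ (subset_refl _) hIccTop)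
        have e2 : (∫ s in Icc (0:ℝ) T, (‖f s - g s‖ + ‖g s - g (φ s)‖)) =
            (∫ s in Icc (0:ℝ) T, ‖f s - g s‖) + ∫ s in Icc (0:ℝ) T, ‖g s - g (φ s)‖ :=
          integral_add hfg_int.integrableOn h2int
        rw [e1, e2]
    _ ≤ β/4 + β/4 + (β/4 + β/4) := by
        exact add_le_add (add_le_add I1 I2) I3
    _ = β := by ring


set_option maxHeartbeats 1000000 in
set_option synthInstance.maxHeartbeats 1000000 in
/-- **Lemma 2.6.** The payoff associated to a control `v` can be approximated by the payoff
of the delayed control `s ↦ v((s-δ)₊)`, uniformly in `u`. -/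
theorem delay_approximation
    {N dU dV : ℕ} (T : ℝ) (hT : 0 < T)
    (U : Set (EN dU)) (V : Set (EN dV)) (hUc : IsCompact U) (hVc : IsCompact V)
    (l : EN N → ℝ → EN dU → EN dV → ℝ) (hl : RegReward T U V l)
    (m : Measure (EN N)) (hm : m ∈ Pi2 N) (ε : ℝ) (hε : 0 < ε)
    (v : ℝ → EN dV) (hv : Measurable v) (hvV : ∀ s, v s ∈ V) :
    ∃ δ > (0:ℝ), ∀ u : ℝ → EN dU, Measurable u → (∀ s, u s ∈ U) →
      |(∫ x, (∫ s in Icc 0 T, l x s (u s) (v s)) ∂m) -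
          ∫ x, (∫ s in Icc 0 T, l x s (u s) (v (max (s - δ) 0))) ∂m| ≤ ε := by
  obtain ⟨hlC, ⟨C₀, hC₀⟩, -⟩ := hl
  set L : EN N × ℝ × EN dU × EN dV → ℝ := fun p => l p.1 p.2.1 p.2.2.1 p.2.2.2 with hLdef
  set S : Set (EN N × ℝ × EN dU × EN dV) := univ ×ˢ Icc 0 T ×ˢ U ×ˢ V with hSdef
  set C : ℝ := max C₀ 1 with hCdef
  have hC1 : (1:ℝ) ≤ C := le_max_right _ _
  have hCpos : (0:ℝ) < C := lt_of_lt_of_le one_pos hC1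
  have hCb : ∀ x, ∀ t ∈ Icc 0 T, ∀ u' ∈ U, ∀ w ∈ V, |l x t u' w| ≤ C :=
    fun x t ht u' hu' w hw => le_trans (hC₀ x t ht u' hu' w hw) (le_max_left _ _)
  obtain ⟨hmprob, -⟩ := hm
  haveI := hmprob
  -- choose the truncation radius R
  have hiInter : (⋂ n : ℕ, (Metric.closedBall (0:EN N) n)ᶜ) = ∅ := by
    ext x
    simp only [mem_iInter, mem_compl_iff, Metric.mem_closedBall, mem_empty_iff_false,
      iff_false, not_forall, not_not]
    obtain ⟨n, hn⟩ := exists_nat_ge (dist x 0)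
    exact ⟨n, hn⟩
  have htends : Tendsto (fun n : ℕ => m ((Metric.closedBall (0:EN N) n)ᶜ)) atTop (𝓝 0) := by
    have := tendsto_measure_iInter_atTop (μ := m)
      (s := fun n : ℕ => (Metric.closedBall (0:EN N) n)ᶜ)
      (fun n => (measurableSet_closedBall.compl).nullMeasurableSet)
      (fun i j hij => compl_subset_compl.2
        (Metric.closedBall_subset_closedBall (by exact_mod_cast hij)))
      ⟨0, measure_ne_top m _⟩
    rw [hiInter, measure_empty] at this
    exact this
  have hofRealpos : (0:ℝ≥0∞) < ENNReal.ofReal (ε/(6*C*T)) :=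
    ENNReal.ofReal_pos.2 (by positivity)
  obtain ⟨R, hR⟩ := (htends.eventually_lt_const hofRealpos).exists
  have hRtail : (m ((Metric.closedBall (0:EN N) R)ᶜ)).toReal < ε/(6*C*T) := by
    rw [← ENNReal.lt_ofReal_iff_toReal_lt (measure_ne_top m _)]
    exact hR
  -- uniform continuity on the compact set K
  set K : Set (EN N × ℝ × EN dU × EN dV) :=
    Metric.closedBall (0:EN N) R ×ˢ Icc 0 T ×ˢ U ×ˢ V with hKdef
  have hKc : IsCompact K :=
    (isCompact_closedBall _ _).prod (isCompact_Icc.prod (hUc.prod hVc))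
  have hKS : K ⊆ S := prod_mono (subset_univ _) subset_rfl
  have hLK : ContinuousOn L K := hlC.mono hKS
  obtain ⟨θ, hθpos, hθspec⟩ :=
    Metric.uniformContinuousOn_iff_le.1 (hKc.uniformContinuousOn_of_continuous hLK)
      (ε/(6*T)) (by positivity)
  -- bound on v and choice of the delay δ
  obtain ⟨B, hBV⟩ := hVc.isBounded.subset_closedBall 0
  have hvB : ∀ s, ‖v s‖ ≤ B := fun s => mem_closedBall_zero_iff.1 (hBV (hvV s))
  obtain ⟨δ, hδpos, hδT, hshift⟩ := shift_small (d := dV) hT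
    (show (0:ℝ) < θ*ε/(12*C) by positivity) v hv hvB
  refine ⟨δ, hδpos, ?_⟩
  intro u hu huU
  -- setup
  set π : ℝ → ℝ := fun s => max (min s T) 0 with hπdef
  have hπmeas : Measurable π := (measurable_id.min measurable_const).max measurable_const
  have hπmem : ∀ s, π s ∈ Icc (0:ℝ) T := fun s =>
    ⟨le_max_right _ _, max_le (min_le_right _ _) (le_of_lt hT)⟩
  have hπeq : ∀ s ∈ Icc (0:ℝ) T, π s = s := by
    intro s hs
    rcases hs with ⟨h0, h1⟩
    rw [hπdef]
    simp only [min_eq_left h1, max_eq_left h0]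
  set vδ : ℝ → EN dV := fun s => v (max (s - δ) 0) with hvδdef
  have hvδmeas : Measurable vδ := hv.comp ((measurable_id.sub_const δ).max measurable_const)
  have hvδV : ∀ s, vδ s ∈ V := fun s => hvV _
  have hIccTop : volume (Icc (0:ℝ) T) ≠ ⊤ := by simp [Real.volume_Icc]
  have hIccToReal : (volume (Icc (0:ℝ) T)).toReal = T := by
    rw [Real.volume_Icc, ENNReal.toReal_ofReal (by linarith : (0:ℝ) ≤ T - 0), sub_zero]
  haveI hB4 : BorelSpace (EN N × ℝ × EN dU × EN dV) := Prod.borelSpace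
  haveI hOM4 : OpensMeasurableSpace (EN N × ℝ × EN dU × EN dV) := BorelSpace.opensMeasurable
  -- the clamped integrand, for w = v and w = vδ
  have hGmeas : ∀ w : ℝ → EN dV, Measurable w → (∀ s, w s ∈ V) →
      Measurable (fun p : EN N × ℝ => L (p.1, π p.2, u p.2, w p.2)) := by
    intro w hw hwV
    have hψ : Measurable (fun p : EN N × ℝ => (p.1, π p.2, u p.2, w p.2)) :=
      measurable_fst.prodMk ((hπmeas.comp measurable_snd).prodMk
        ((hu.comp measurable_snd).prodMk (hw.comp measurable_snd)))
    have hmemS : ∀ p : EN N × ℝ, (p.1, π p.2, u p.2, w p.2) ∈ S := by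
      intro p
      simp only [hSdef, Set.mem_prod]
      exact ⟨trivial, hπmem _, huU _, hwV _⟩
    have hres : Measurable (S.restrict L) := hlC.restrict.measurable
    exact hres.comp (hψ.subtype_mk (h := hmemS))
  have hGb : ∀ (w : ℝ → EN dV), (∀ s, w s ∈ V) → ∀ (x : EN N) (s : ℝ),
      |L (x, π s, u s, w s)| ≤ C := by
    intro w hwV x s
    exact hCb x _ (hπmem s) _ (huU s) _ (hwV s)
  have hGintOn : ∀ w : ℝ → EN dV, Measurable w → (∀ s, w s ∈ V) → ∀ x : EN N,
      IntegrableOn (fun s => L (x, π s, u s, w s)) (Icc 0 T) := by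
    intro w hw hwV x
    refine bdd_integrableOn hIccTop
      (((hGmeas w hw hwV).comp measurable_prodMk_left).aestronglyMeasurable) (C := C) ?_
    intro s
    rw [Real.norm_eq_abs]
    exact hGb w hwV x s
  set Iv : EN N → ℝ := fun x => ∫ s in Icc 0 T, L (x, π s, u s, v s) with hIvdef
  set Ivδ : EN N → ℝ := fun x => ∫ s in Icc 0 T, L (x, π s, u s, vδ s) with hIvδdef
  have hinner : ∀ x, (∫ s in Icc 0 T, l x s (u s) (v s)) = Iv x := by
    intro x
    refine setIntegral_congr_fun measurableSet_Icc ?_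
    intro s hs
    simp only [hLdef, hπeq s hs]
  have hinnerδ : ∀ x, (∫ s in Icc 0 T, l x s (u s) (vδ s)) = Ivδ x := by
    intro x
    refine setIntegral_congr_fun measurableSet_Icc ?_
    intro s hs
    simp only [hLdef, hπeq s hs]
  have hImeas : ∀ w : ℝ → EN dV, Measurable w → (∀ s, w s ∈ V) →
      AEStronglyMeasurable (fun x => ∫ s in Icc 0 T, L (x, π s, u s, w s)) m := by
    intro w hw hwV
    exact ((hGmeas w hw hwV).stronglyMeasurable.integral_prod_right').aestronglyMeasurable
  have hIb : ∀ w : ℝ → EN dV, Measurable w → (∀ s, w s ∈ V) → ∀ x,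
      |∫ s in Icc 0 T, L (x, π s, u s, w s)| ≤ C * T := by
    intro w hw hwV x
    have := norm_setIntegral_le_of_norm_le_const (μ := volume) (s := Icc (0:ℝ) T)
      (f := fun s => L (x, π s, u s, w s)) (C := C) (lt_top_iff_ne_top.2 hIccTop)
      (fun s _ => by rw [Real.norm_eq_abs]; exact hGb w hwV x s)
    rw [Real.norm_eq_abs, measureReal_def, hIccToReal] at this
    exact this
  have hIint : ∀ w : ℝ → EN dV, Measurable w → (∀ s, w s ∈ V) →
      Integrable (fun x => ∫ s in Icc 0 T, L (x, π s, u s, w s)) m := by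
    intro w hw hwV
    refine Integrable.mono' (integrable_const (C*T)) (hImeas w hw hwV) ?_
    exact ae_of_all _ fun x => by rw [Real.norm_eq_abs]; exact hIb w hw hwV x
  have hIvint : Integrable Iv m := hIint v hv hvV
  have hIvδint : Integrable Ivδ m := hIint vδ hvδmeas hvδV
  -- pointwise bounds on |Iv x - Ivδ x|
  have hD1 : ∀ x, |Iv x - Ivδ x| ≤ 2*(C*T) := by
    intro x
    calc |Iv x - Ivδ x| ≤ |Iv x| + |Ivδ x| := abs_sub _ _
      _ ≤ C*T + C*T := add_le_add (hIb v hv hvV x) (hIb vδ hvδmeas hvδV x)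
      _ = 2*(C*T) := by ring
  have hD2 : ∀ x ∈ Metric.closedBall (0:EN N) R, |Iv x - Ivδ x| ≤ ε/3 := by
    intro x hx
    have hsub : Iv x - Ivδ x = ∫ s in Icc 0 T,
        (L (x, π s, u s, v s) - L (x, π s, u s, vδ s)) :=
      (integral_sub (hGintOn v hv hvV x) (hGintOn vδ hvδmeas hvδV x)).symm
    have habs : |Iv x - Ivδ x| ≤ ∫ s in Icc 0 T,
        |L (x, π s, u s, v s) - L (x, π s, u s, vδ s)| := by
      rw [hsub]
      have hni := norm_integral_le_integral_norm (μ := volume.restrict (Icc 0 T))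
        (f := fun s => L (x, π s, u s, v s) - L (x, π s, u s, vδ s))
      simpa only [Real.norm_eq_abs] using hni
    -- pointwise comparison on Icc 0 T
    have hpt : ∀ s ∈ Icc (0:ℝ) T,
        |L (x, π s, u s, v s) - L (x, π s, u s, vδ s)| ≤
          ε/(6*T) + (2*C/θ) * ‖v s - vδ s‖ := by
      intro s hs
      have hps : π s = s := hπeq s hs
      have hpK : (x, s, u s, v s) ∈ K := by
        simp only [hKdef, Set.mem_prod]
        exact ⟨hx, hs, huU s, hvV s⟩
      have hqK : (x, s, u s, vδ s) ∈ K := by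
        simp only [hKdef, Set.mem_prod]
        exact ⟨hx, hs, huU s, hvδV s⟩
      by_cases hcase : ‖v s - vδ s‖ ≤ θ
      · have hdist : dist ((x, s, u s, v s) : EN N × ℝ × EN dU × EN dV)
            (x, s, u s, vδ s) ≤ θ := by
          simp only [Prod.dist_eq, dist_self]
          exact max_le (le_of_lt hθpos) (max_le (le_of_lt hθpos)
            (max_le (le_of_lt hθpos) (by rwa [dist_eq_norm])))
        have := hθspec _ hpK _ hqK hdist
        rw [Real.dist_eq] at this
        simp only [hLdef] at this ⊢
        rw [hps]
        refine le_trans this ?_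
        have : (0:ℝ) ≤ (2*C/θ) * ‖v s - vδ s‖ := by positivity
        linarith
      · push_neg at hcase
        have h2C : |L (x, π s, u s, v s) - L (x, π s, u s, vδ s)| ≤ 2*C := by
          calc |L (x, π s, u s, v s) - L (x, π s, u s, vδ s)|
              ≤ |L (x, π s, u s, v s)| + |L (x, π s, u s, vδ s)| := abs_sub _ _
            _ ≤ C + C := add_le_add (hGb v hvV x s) (hGb vδ hvδV x s)
            _ = 2*C := by ring
        have h2C' : 2*C ≤ (2*C/θ) * ‖v s - vδ s‖ := by
          rw [div_mul_eq_mul_div, le_div_iff₀ hθpos]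
          have : (0:ℝ) < 2*C := by positivity
          nlinarith
        have hεpos : (0:ℝ) ≤ ε/(6*T) := by positivity
        linarith
    -- integrate the comparison
    have hnint : IntegrableOn (fun s => ‖v s - vδ s‖) (Icc 0 T) := by
      refine bdd_integrableOn hIccTop ((hv.sub hvδmeas).norm.aestronglyMeasurable)
        (C := B + B) ?_
      intro s
      rw [norm_norm]
      exact le_trans (norm_sub_le _ _) (add_le_add (hvB _) (hvB _))
    have hrhsint : IntegrableOn (fun s => ε/(6*T) + (2*C/θ) * ‖v s - vδ s‖) (Icc 0 T) :=
      (integrableOn_const hIccTop).add (hnint.const_mul _)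
    have hlhsint : IntegrableOn
        (fun s => |L (x, π s, u s, v s) - L (x, π s, u s, vδ s)|) (Icc 0 T) :=
      ((hGintOn v hv hvV x).sub (hGintOn vδ hvδmeas hvδV x)).abs
    have hint2 : (∫ s in Icc 0 T,
        |L (x, π s, u s, v s) - L (x, π s, u s, vδ s)|) ≤
        ∫ s in Icc 0 T, (ε/(6*T) + (2*C/θ) * ‖v s - vδ s‖) :=
      setIntegral_mono_on hlhsint hrhsint measurableSet_Icc hpt
    have hval : (∫ s in Icc 0 T, (ε/(6*T) + (2*C/θ) * ‖v s - vδ s‖))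
        = ε/6 + (2*C/θ) * ∫ s in Icc 0 T, ‖v s - vδ s‖ := by
      rw [integral_add (integrableOn_const (C := ε/(6*T)) hIccTop) (hnint.const_mul _),
        setIntegral_const, integral_const_mul, smul_eq_mul, measureReal_def, hIccToReal]
      congr 1
      field_simp
    have hfin : (2*C/θ) * (∫ s in Icc 0 T, ‖v s - vδ s‖) ≤ ε/6 := by
      calc (2*C/θ) * (∫ s in Icc 0 T, ‖v s - vδ s‖) ≤ (2*C/θ) * (θ*ε/(12*C)) := by
            apply mul_le_mul_of_nonneg_left hshift (by positivity)
        _ = ε/6 := by field_simp; ring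
    calc |Iv x - Ivδ x| ≤ ∫ s in Icc 0 T,
          |L (x, π s, u s, v s) - L (x, π s, u s, vδ s)| := habs
      _ ≤ ∫ s in Icc 0 T, (ε/(6*T) + (2*C/θ) * ‖v s - vδ s‖) := hint2
      _ = ε/6 + (2*C/θ) * ∫ s in Icc 0 T, ‖v s - vδ s‖ := hval
      _ ≤ ε/6 + ε/6 := by linarith
      _ = ε/3 := by ring
  -- assemble
  set Bl : Set (EN N) := Metric.closedBall (0:EN N) R with hBldef
  have hBlmeas : MeasurableSet Bl := measurableSet_closedBall
  set bfun : EN N → ℝ := fun x =>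
    Bl.indicator (fun _ => ε/3) x + Blᶜ.indicator (fun _ => 2*(C*T)) x with hbdef
  have hbint : Integrable bfun m :=
    ((integrable_const _).indicator hBlmeas).add ((integrable_const _).indicator hBlmeas.compl)
  have hDle : ∀ x, |Iv x - Ivδ x| ≤ bfun x := by
    intro x
    by_cases hx : x ∈ Bl
    · rw [hbdef]
      simp only [indicator_of_mem hx, indicator_of_notMem (fun hc => hc hx : x ∉ Blᶜ)]
      simpa using hD2 x hx
    · rw [hbdef]
      simp only [indicator_of_notMem hx, indicator_of_mem (mem_compl hx)]
      simpa using hD1 x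
  have hbval : (∫ x, bfun x ∂m) ≤ ε/3 + ε/3 := by
    rw [hbdef]
    rw [integral_add ((integrable_const _).indicator hBlmeas)
      ((integrable_const _).indicator hBlmeas.compl),
      integral_indicator_const _ hBlmeas, integral_indicator_const _ hBlmeas.compl,
      smul_eq_mul, smul_eq_mul, measureReal_def, measureReal_def]
    have h1 : (m Bl).toReal ≤ 1 := by
      rw [← ENNReal.toReal_one]
      exact ENNReal.toReal_mono ENNReal.one_ne_top prob_le_one
    have h2 : (m Blᶜ).toReal * (2*(C*T)) ≤ ε/3 := by
      have : (m Blᶜ).toReal < ε/(6*C*T) := hRtail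
      have hpos : (0:ℝ) ≤ (m Blᶜ).toReal := ENNReal.toReal_nonneg
      calc (m Blᶜ).toReal * (2*(C*T)) ≤ (ε/(6*C*T)) * (2*(C*T)) := by
            apply mul_le_mul_of_nonneg_right (le_of_lt this) (by positivity)
        _ = ε/3 := by field_simp; ring
    have h3 : (m Bl).toReal * (ε/3) ≤ ε/3 := by
      calc (m Bl).toReal * (ε/3) ≤ 1 * (ε/3) :=
            mul_le_mul_of_nonneg_right h1 (by positivity)
        _ = ε/3 := one_mul _
    linarith
  calc |(∫ x, (∫ s in Icc 0 T, l x s (u s) (v s)) ∂m) -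
          ∫ x, (∫ s in Icc 0 T, l x s (u s) (v (max (s - δ) 0))) ∂m|
      = |(∫ x, Iv x ∂m) - ∫ x, Ivδ x ∂m| := by
        rw [integral_congr_ae (ae_of_all _ hinner), integral_congr_ae (ae_of_all _ hinnerδ)]
    _ = |∫ x, (Iv x - Ivδ x) ∂m| := by rw [integral_sub hIvint hIvδint]
    _ ≤ ∫ x, |Iv x - Ivδ x| ∂m := by
        have hni := norm_integral_le_integral_norm (μ := m) (f := fun x => Iv x - Ivδ x)
        simpa only [Real.norm_eq_abs] using hni
    _ ≤ ∫ x, bfun x ∂m := by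
        apply integral_mono ((hIvint.sub hIvδint).abs) hbint hDle
    _ ≤ ε/3 + ε/3 := hbval
    _ ≤ ε := by linarith

end
end

section
/- Let f : [0,T] → ℝ be continuous and let w : [0,T] → ℝ be continuous and a viscosity subsolution of w'(t) + f(t) = 0 on (0,T), in the sense that for every C¹ function φ : [0,T] → ℝ such that w − φ has a local maximum at t̄ ∈ (0,T), one has φ'(t̄) + f(t̄) ≥ 0. Then for all 0 ≤ t ≤ s ≤ T, w(s) − w(t) + ∫_t^s f(r) dr ≥ 0. -/
open MeasureTheory Set Filter Topology
open scoped ENNReal NNReal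

noncomputable section

lemma minsq_hasDerivAt (x : ℝ) :
    HasDerivAt (fun y : ℝ => (min y 0) ^ 2) (2 * min x 0) x := by
  rcases lt_trichotomy x 0 with hx | rfl | hx
  · have h2 : HasDerivAt (fun y : ℝ => y ^ 2) (2 * x) x := by
      simpa using hasDerivAt_pow 2 x
    rw [min_eq_left hx.le]
    apply h2.congr_of_eventuallyEq
    filter_upwards [Iio_mem_nhds hx] with y hy
    simp [min_eq_left (mem_Iio.mp hy).le]
  · rw [min_self, mul_zero]
    rw [hasDerivAt_iff_isLittleO]
    simp only [sub_zero, smul_zero, min_self, ne_eq, OfNat.ofNat_ne_zero,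
      not_false_eq_true, zero_pow, sub_zero]
    rw [Asymptotics.isLittleO_iff]
    intro c hc
    filter_upwards [Metric.ball_mem_nhds (0:ℝ) hc] with y hy
    have h1 : |min y 0| ≤ |y| := by
      rcases le_or_gt y 0 with h | h
      · rw [min_eq_left h]
      · rw [min_eq_right h.le]; simp [abs_nonneg]
    have h2 : ‖(min y 0) ^ 2‖ ≤ |y| * |y| := by
      rw [Real.norm_eq_abs, abs_pow, sq]
      exact mul_le_mul h1 h1 (abs_nonneg _) (abs_nonneg _)
    refine h2.trans ?_
    have hyb : |y| ≤ c := by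
      simpa [Real.dist_eq] using (mem_ball_zero_iff.mp hy).le
    have := mul_le_mul_of_nonneg_right hyb (abs_nonneg y)
    simpa [Real.norm_eq_abs] using this
  · rw [min_eq_right hx.le, mul_zero]
    apply (hasDerivAt_const x (0:ℝ)).congr_of_eventuallyEq
    filter_upwards [Ioi_mem_nhds hx] with y hy
    simp [min_eq_right (mem_Ioi.mp hy).le]

lemma minsq_contDiff : ContDiff ℝ 1 (fun y : ℝ => (min y 0) ^ 2) := by
  rw [contDiff_one_iff_deriv]
  refine ⟨fun x => (minsq_hasDerivAt x).differentiableAt, ?_⟩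
  have h : deriv (fun y : ℝ => (min y 0) ^ 2) = fun x => 2 * min x 0 :=
    funext fun x => (minsq_hasDerivAt x).deriv
  rw [h]
  fun_prop

/-- A continuous viscosity subsolution of the ODE `w' + f = 0` on `(0,T)` satisfies the
integral inequality `w(s) - w(t) + ∫_t^s f(r) dr ≥ 0` for all `0 ≤ t ≤ s ≤ T`. -/
theorem subsolution_integral_inequality
    (T : ℝ) (hT : 0 < T) (f w : ℝ → ℝ)
    (hf : ContinuousOn f (Icc 0 T)) (hw : ContinuousOn w (Icc 0 T))
    (hsub : ∀ φ : ℝ → ℝ, ContDiff ℝ 1 φ → ∀ tb ∈ Ioo 0 T,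
      IsLocalMax (fun t => w t - φ t) tb → deriv φ tb + f tb ≥ 0) :
    ∀ t ∈ Icc 0 T, ∀ s ∈ Icc 0 T, t ≤ s →
      0 ≤ w s - w t + ∫ r in t..s, f r := by
  -- continuous extension of f to ℝ by clamping
  set fc : ℝ → ℝ := fun r => f (max 0 (min r T)) with hfc_def
  have hclamp : ∀ r, max 0 (min r T) ∈ Icc 0 T := by
    intro r
    exact ⟨le_max_left _ _, max_le hT.le (min_le_right _ _)⟩
  have hfc : Continuous fc := by
    apply hf.comp_continuous
    · fun_prop
    · exact hclamp
  have hfc_eq : ∀ r ∈ Icc 0 T, fc r = f r := by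
    intro r hr
    simp only [hfc_def]
    rw [min_eq_left hr.2, max_eq_right hr.1]
  -- antiderivative
  set F : ℝ → ℝ := fun r => ∫ x in (0:ℝ)..r, fc x with hF_def
  have hF : ∀ x, HasDerivAt F (fc x) x := by
    intro x
    exact intervalIntegral.integral_hasDerivAt_right (hfc.intervalIntegrable _ _)
      hfc.aestronglyMeasurable.stronglyMeasurableAtFilter hfc.continuousAt
  have hFC : ContDiff ℝ 1 F := by
    rw [contDiff_one_iff_deriv]
    refine ⟨fun x => (hF x).differentiableAt, ?_⟩
    have : deriv F = fc := funext fun x => (hF x).deriv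
    rw [this]; exact hfc
  have hFcont : Continuous F := hFC.continuous
  set g : ℝ → ℝ := fun r => w r + F r with hg_def
  have hg : ContinuousOn g (Icc 0 T) := hw.add hFcont.continuousOn
  -- subsolution property for g
  have hgsub : ∀ ψ : ℝ → ℝ, ContDiff ℝ 1 ψ → ∀ tb ∈ Ioo 0 T,
      IsLocalMax (fun t => g t - ψ t) tb → deriv ψ tb ≥ 0 := by
    intro ψ hψ tb htb hmax
    have hφ : ContDiff ℝ 1 (fun x => ψ x - F x) := hψ.sub hFC
    have hmax' : IsLocalMax (fun t => w t - (ψ t - F t)) tb := by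
      have heq : (fun t => w t - (ψ t - F t)) = fun t => g t - ψ t := by
        funext t; simp [hg_def]; ring
      rw [heq]; exact hmax
    have hs := hsub _ hφ tb htb hmax'
    have hd : deriv (fun x => ψ x - F x) tb = deriv ψ tb - fc tb := by
      rw [deriv_fun_sub (hψ.differentiable one_ne_zero _) (hF tb).differentiableAt, (hF tb).deriv]
    rw [hd] at hs
    have htbIcc : tb ∈ Icc 0 T := ⟨htb.1.le, htb.2.le⟩
    rw [hfc_eq tb htbIcc] at hs
    linarith
  clear_value g
  -- core: g is monotone on the open interval
  have key : ∀ a ∈ Ioo 0 T, ∀ b ∈ Ioo 0 T, a ≤ b → g a ≤ g b := by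
    intro a ha b hb hab
    rcases eq_or_lt_of_le hab with rfl | hab
    · exact le_rfl
    by_contra hcon
    push_neg at hcon
    have hba : 0 < b - a := by linarith
    obtain ⟨ε, hε, hεb⟩ : ∃ ε : ℝ, 0 < ε ∧ g b + ε * (b - a) < g a := by
      refine ⟨(g a - g b) / (2 * (b - a)), div_pos (by linarith) (by linarith), ?_⟩
      have hne : (2 : ℝ) * (b - a) ≠ 0 := by positivity
      have heq : (g a - g b) / (2 * (b - a)) * (b - a) = (g a - g b) / 2 := by
        field_simp
      rw [heq]
      linarith
    obtain ⟨a', ha'0, ha'a⟩ : ∃ a', 0 < a' ∧ a' < a :=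
      ⟨a / 2, by linarith [ha.1], by linarith [ha.1]⟩
    have hsq : 0 < (a - a') ^ 2 := pow_pos (by linarith) 2
    obtain ⟨K, hK0, hKbig⟩ : ∃ K : ℝ, 0 < K ∧
        g a' + ε * (a - a') - g a < K * (a - a') ^ 2 := by
      refine ⟨max 0 ((g a' + ε * (a - a') - g a) / (a - a') ^ 2) + 1,
        by linarith [le_max_left (0:ℝ) ((g a' + ε * (a - a') - g a) / (a - a') ^ 2)], ?_⟩
      have h1 : (g a' + ε * (a - a') - g a) / (a - a') ^ 2
          ≤ max 0 ((g a' + ε * (a - a') - g a) / (a - a') ^ 2) := le_max_right _ _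
      have h2 : g a' + ε * (a - a') - g a
          ≤ (max 0 ((g a' + ε * (a - a') - g a) / (a - a') ^ 2)) * (a - a') ^ 2 := by
        rw [← div_le_iff₀ hsq]
        exact h1
      nlinarith
    set ψ : ℝ → ℝ := fun x => -ε * (x - a) + K * (min (x - a) 0) ^ 2 with hψ_def
    have hψC : ContDiff ℝ 1 ψ := by
      apply ContDiff.add
      · fun_prop
      · exact contDiff_const.mul (minsq_contDiff.comp (contDiff_id.sub contDiff_const))
    have hψd : ∀ x, HasDerivAt ψ (-ε + K * (2 * min (x - a) 0)) x := by
      intro x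
      have h1 : HasDerivAt (fun y : ℝ => -ε * (y - a)) (-ε) x := by
        simpa using ((hasDerivAt_id x).sub_const a).const_mul (-ε)
      have h2 : HasDerivAt (fun y : ℝ => (min (y - a) 0) ^ 2) (2 * min (x - a) 0) x := by
        have := (minsq_hasDerivAt (x - a)).comp x ((hasDerivAt_id x).sub_const a)
        rw [mul_one] at this
        exact this
      have := h1.add (h2.const_mul K)
      rw [hψ_def]
      exact this
    set h : ℝ → ℝ := fun x => g x - ψ x with hh_def
    have hIcc : Icc a' b ⊆ Icc 0 T := Icc_subset_Icc ha'0.le hb.2.le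
    have hhcont : ContinuousOn h (Icc a' b) :=
      ((hg.mono hIcc).sub (hψC.continuous.continuousOn))
    have hha : h a = g a := by
      simp [hh_def, hψ_def]
    have hhb : h b = g b + ε * (b - a) := by
      have hm0 : min (b - a) 0 = 0 := min_eq_right hba.le
      simp only [hh_def, hψ_def, hm0]
      ring
    have hha' : h a' < h a := by
      have hmin : min (a' - a) 0 = a' - a := min_eq_left (by linarith)
      have he : h a' = g a' + ε * (a' - a) - K * (a' - a) ^ 2 := by
        simp only [hh_def, hψ_def, hmin]; ring
      rw [he, hha]
      have hsq' : (a' - a) ^ 2 = (a - a') ^ 2 := by ring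
      rw [hsq']
      nlinarith [hKbig]
    clear_value h
    obtain ⟨r, hrmem, hrmax⟩ := isCompact_Icc.exists_isMaxOn
      (nonempty_Icc.mpr (by linarith)) hhcont
    have haab : a ∈ Icc a' b := ⟨ha'a.le, hab.le⟩
    have hmaxa : h a ≤ h r := hrmax haab
    have hra' : r ≠ a' := by
      intro hr
      rw [hr] at hmaxa
      linarith
    have hrb : r ≠ b := by
      intro hr
      rw [hr, hhb, hha] at hmaxa
      linarith
    have hrIoo : r ∈ Ioo a' b :=
      ⟨lt_of_le_of_ne hrmem.1 (Ne.symm hra'), lt_of_le_of_ne hrmem.2 hrb⟩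
    have hrT : r ∈ Ioo 0 T := ⟨lt_trans ha'0 hrIoo.1, lt_of_lt_of_le hrIoo.2 hb.2.le⟩
    have hlmax : IsLocalMax h r := hrmax.isLocalMax (Icc_mem_nhds hrIoo.1 hrIoo.2)
    rw [hh_def] at hlmax
    have hder := hgsub ψ hψC r hrT hlmax
    rw [(hψd r).deriv] at hder
    have hminle : min (r - a) 0 ≤ 0 := min_le_right _ _
    nlinarith [hK0, hε, hder, hminle]
  -- extend to closed interval by continuity
  intro t ht s hs hts
  have hgoal : g t ≤ g s := by
    rcases eq_or_lt_of_le hts with rfl | hts'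
    · exact le_rfl
    obtain ⟨m, hm1, hm2⟩ : ∃ m, t < m ∧ m < s := ⟨(t + s) / 2, by linarith, by linarith⟩
    have hmT : m ∈ Ioo 0 T := ⟨lt_of_le_of_lt ht.1 hm1, lt_of_lt_of_le hm2 hs.2⟩
    have hsub1 : Ioo t m ⊆ Icc 0 T := fun x hx =>
      ⟨le_trans ht.1 hx.1.le, le_trans hx.2.le (le_trans hm2.le hs.2)⟩
    have hsub2 : Ioo m s ⊆ Icc 0 T := fun x hx =>
      ⟨le_trans hmT.1.le hx.1.le, le_trans hx.2.le hs.2⟩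
    have hne1 : (𝓝[Ioo t m] t).NeBot := by
      rw [← mem_closure_iff_nhdsWithin_neBot, closure_Ioo (ne_of_lt hm1)]
      exact ⟨le_rfl, hm1.le⟩
    have hne2 : (𝓝[Ioo m s] s).NeBot := by
      rw [← mem_closure_iff_nhdsWithin_neBot, closure_Ioo (ne_of_lt hm2)]
      exact ⟨hm2.le, le_rfl⟩
    have htend1 : Tendsto g (𝓝[Ioo t m] t) (𝓝 (g t)) := by
      apply ((hg t ht).mono hsub1).tendsto.mono_left
      exact nhdsWithin_mono t (fun x hx => hx)
    have htend2 : Tendsto g (𝓝[Ioo m s] s) (𝓝 (g s)) := by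
      apply ((hg s hs).mono hsub2).tendsto.mono_left
      exact nhdsWithin_mono s (fun x hx => hx)
    have h1 : g t ≤ g m := by
      apply le_of_tendsto htend1
      filter_upwards [self_mem_nhdsWithin] with x hx
      exact key x ⟨lt_of_le_of_lt ht.1 hx.1, lt_of_lt_of_le (lt_trans hx.2 hm2) hs.2⟩
        m hmT hx.2.le
    have h2 : g m ≤ g s := by
      apply ge_of_tendsto htend2
      filter_upwards [self_mem_nhdsWithin] with x hx
      exact key m hmT x ⟨lt_trans hmT.1 hx.1, lt_of_lt_of_le hx.2 hs.2⟩ hx.1.le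
    linarith
  have hint : (∫ r in t..s, f r) = F s - F t := by
    have h1 : (∫ r in t..s, f r) = ∫ r in t..s, fc r := by
      apply intervalIntegral.integral_congr
      intro x hx
      rw [uIcc_of_le hts] at hx
      exact (hfc_eq x ⟨le_trans ht.1 hx.1, le_trans hx.2 hs.2⟩).symm
    rw [h1, hF_def]
    exact (intervalIntegral.integral_interval_sub_left
      (hfc.intervalIntegrable _ _) (hfc.intervalIntegrable _ _)).symm
  rw [hint]
  rw [hg_def] at hgoal
  simp only at hgoal
  linarith
end
end
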